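/- Let V : ℕ → ℝ be a sequence of nonnegative reals, γ : ℕ → ℝ a nonnegative sequence with ∑ γ k < ∞, and W : ℕ → ℝ a nonnegative sequence such that V (k+1) - V k ≤ γ k - W k for all k. Then (i) the sequence V k converges to a finite limit, and (ii) ∑_{k=0}^{∞} W k < ∞, so in particular liminf W k = 0. -/
import Mathlib


open Filter

theorem stmt_1 (V γ W : ℕ → ℝ)
    (hVnn : ∀ k, 0 ≤ V k) (hγnn : ∀ k, 0 ≤ γ k) (hWnn : ∀ k, 0 ≤ W k)
    (hγsum : Summable γ)
    (hdiff : ∀ k, V (k + 1) - V k ≤ γ k - W k) :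
    (∃ L : ℝ, Tendsto V atTop (nhds L)) ∧ Summable W ∧
      liminf W atTop = 0 := by
  -- Summability of W
  have hWsum : Summable W := by
    apply summable_of_sum_range_le hWnn (c := V 0 + ∑' k, γ k)
    intro n
    have key : V n + ∑ i ∈ Finset.range n, W i ≤ V 0 + ∑ i ∈ Finset.range n, γ i := by
      induction n with
      | zero => simp
      | succ m ih =>
        rw [Finset.sum_range_succ, Finset.sum_range_succ]
        have := hdiff m
        linarith
    have hγle : ∑ i ∈ Finset.range n, γ i ≤ ∑' k, γ k :=
      Summable.sum_le_tsum _ (fun i _ => hγnn i) hγsum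
    have := hVnn n
    linarith
  -- the auxiliary decreasing sequence
  set S : ℕ → ℝ := fun n => ∑ i ∈ Finset.range n, (W i - γ i) with hS
  have hf_anti : Antitone (fun n => V n + S n) := by
    apply antitone_nat_of_succ_le
    intro n
    have := hdiff n
    simp only [hS, Finset.sum_range_succ]
    linarith
  have hf_bdd : BddBelow (Set.range (fun n => V n + S n)) := by
    refine ⟨-∑' k, γ k, ?_⟩
    rintro x ⟨n, rfl⟩
    have h1 : -∑ i ∈ Finset.range n, γ i ≤ S n := by
      simp only [hS, Finset.sum_sub_distrib]
      have : 0 ≤ ∑ i ∈ Finset.range n, W i :=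
        Finset.sum_nonneg fun i _ => hWnn i
      linarith
    have h2 : ∑ i ∈ Finset.range n, γ i ≤ ∑' k, γ k :=
      Summable.sum_le_tsum _ (fun i _ => hγnn i) hγsum
    have := hVnn n
    simp only
    linarith
  have hf_lim : Tendsto (fun n => V n + S n) atTop (nhds (⨅ n, V n + S n)) :=
    tendsto_atTop_ciInf hf_anti hf_bdd
  have hWG : Summable (fun i => W i - γ i) := hWsum.sub hγsum
  have hS_lim : Tendsto S atTop (nhds (∑' i, (W i - γ i))) :=
    hWG.hasSum.tendsto_sum_nat
  have hV_lim : Tendsto V atTop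
      (nhds ((⨅ n, V n + S n) - ∑' i, (W i - γ i))) := by
    have := hf_lim.sub hS_lim
    simpa using this
  refine ⟨⟨_, hV_lim⟩, hWsum, ?_⟩
  have hW0 : Tendsto W atTop (nhds 0) := hWsum.tendsto_atTop_zero
  exact hW0.liminf_eq
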